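/- Let R be a ring, z an indeterminate, S = R[z], and M an S-module with zM = 0, viewed also as an R-module in the natural way. Then the associated primes of M over S are exactly the ideals of the form qS + (z) where q ranges over the associated primes of M over R. -/

import Mathlib

open Polynomial

lemma key_ideal (R : Type) [CommRing R] (q : Ideal R) :
    q.map (Polynomial.C : R →+* Polynomial R) ⊔ Ideal.span {(X : Polynomial R)} =
      q.comap (constantCoeff : Polynomial R →+* R) := by
  apply le_antisymm
  · apply sup_le
    · rw [Ideal.map_le_iff_le_comap]
      intro r hr
      simpa [Ideal.mem_comap] using hr
    · rw [Ideal.span_le]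
      simp [Ideal.mem_comap]
  · intro f hf
    have h : f = X * f.divX + Polynomial.C (f.coeff 0) := (X_mul_divX_add f).symm
    rw [h]
    refine add_mem ?_ ?_
    · exact Ideal.mem_sup_right (Ideal.mul_mem_right _ _ (Ideal.subset_span rfl))
    · exact Ideal.mem_sup_left (Ideal.mem_map_of_mem _ hf)

/-- Let `R` be a ring, `z` an indeterminate, `S = R[z]`, and `M` an
`S`-module with `zM = 0`, viewed as an `R`-module in the natural way (scalar tower).
Then `Ass_S(M) = { qS + (z) : q ∈ Ass_R(M) }`. -/
theorem associatedPrimes_polynomial_of_X_smul_eq_zero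
    (R : Type) [CommRing R] (M : Type) [AddCommGroup M]
    [Module (Polynomial R) M] [Module R M] [IsScalarTower R (Polynomial R) M]
    (hz : ∀ m : M, (Polynomial.X : Polynomial R) • m = 0) :
    associatedPrimes (Polynomial R) M =
      (fun q : Ideal R =>
          q.map (Polynomial.C : R →+* Polynomial R) ⊔
            Ideal.span {(Polynomial.X : Polynomial R)}) ''
        associatedPrimes R M := by
  have hC : ∀ (r : R) (x : M), (Polynomial.C r : Polynomial R) • x = r • x := by
    intro r x
    rw [← Polynomial.algebraMap_eq, algebraMap_smul]
  have hsmul : ∀ (f : Polynomial R) (x : M), f • x = (f.coeff 0) • x := by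
    intro f x
    conv_lhs => rw [← X_mul_divX_add f]
    rw [add_smul, mul_smul, hz, zero_add, hC]
  ext p
  constructor
  · rintro ⟨hp, x, hx⟩
    refine ⟨p.comap (Polynomial.C : R →+* Polynomial R),
      ⟨hp.comap _, x, ?_⟩, ?_⟩
    · ext r
      rw [Ideal.mem_comap, hx]
      simp only [Ideal.mem_radical_iff, Submodule.mem_colon_singleton, Submodule.mem_bot]
      refine exists_congr fun n => ?_
      rw [← map_pow, hC]
    · simp only [key_ideal]
      ext f
      rw [Ideal.mem_comap, Ideal.mem_comap, hx]
      simp only [Ideal.mem_radical_iff, Submodule.mem_colon_singleton, Submodule.mem_bot]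
      refine exists_congr fun n => ?_
      rw [hsmul, hsmul (f ^ n), ← map_pow, coeff_C_zero, ← map_pow, constantCoeff_apply]
  · rintro ⟨q, ⟨hq, x, hxq⟩, rfl⟩
    simp only [key_ideal]
    refine ⟨hq.comap _, x, ?_⟩
    ext f
    rw [Ideal.mem_comap, hxq]
    simp only [Ideal.mem_radical_iff, Submodule.mem_colon_singleton, Submodule.mem_bot]
    refine exists_congr fun n => ?_
    rw [hsmul (f ^ n), ← map_pow, constantCoeff_apply]
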